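/- A trace (with unique write values, so each read has a unique dictating write) satisfies PRAM consistency with respect to process p₀ if and only if the closure of the operation graph under program-order edges, write-to-order edges, and Rule C edges is acyclic. -/

import Mathlib

/-- Abstract data of a read/write trace (restricted to the operations visible to the
distinguished process `p₀ = 0`, i.e. all writes plus `p₀`'s reads): operation type,
variable, issuing process, program order, and the dictating-write map `D` (well defined
since writes assign unique values per variable). -/
structure PramTrace (ι : Type) where
  isRead : ι → Bool
  var : ι → ℕ
  proc : ι → ℕ
  po : ι → ι → Prop
  D : ι → ι
  po_trans : Transitive po
  po_irrefl : Irreflexive po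
  po_proc : ∀ a b, po a b → proc a = proc b
  po_total : ∀ a b, proc a = proc b → a ≠ b → po a b ∨ po b a
  reads_p0 : ∀ r, isRead r = true → proc r = 0
  D_write : ∀ r, isRead r = true → isRead (D r) = false
  D_var : ∀ r, isRead r = true → var (D r) = var r

variable {ι : Type} [Fintype ι]

/-- `σ` is (the numbering of) a legal schedule of the operations respecting program
order and write-to order: it is injective, respects `≺_PO` and `≺_WR`, and every read
reads the latest preceding write on its variable (i.e. its dictating write precedes it
with no other write on the same variable in between). -/
def PramTrace.Legal (T : PramTrace ι) (σ : ι → ℕ) : Prop :=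
  Function.Injective σ ∧
  (∀ a b, T.po a b → σ a < σ b) ∧
  (∀ r, T.isRead r = true → σ (T.D r) < σ r) ∧
  (∀ r w', T.isRead r = true → T.isRead w' = false → T.var w' = T.var r →
    w' ≠ T.D r → ¬ (σ (T.D r) < σ w' ∧ σ w' < σ r))

/-- The trace satisfies PRAM consistency (w.r.t. the distinguished process `p₀`):
there is a legal schedule of its visible operations respecting program order and
write-to order. -/
def PramTrace.PRAM (T : PramTrace ι) : Prop := ∃ σ : ι → ℕ, T.Legal σ

/-- `E` contains the program-order edges and write-to edges, and is closed under
Rule C: for every triple `w = D(r)`, `r`, `w'` on the same variable with `w' ≠ w` and a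
directed path from `w'` to `r`, the edge `w' → w` is in `E`. -/
def PramTrace.ClosedG (T : PramTrace ι) (E : ι → ι → Prop) : Prop :=
  (∀ a b, T.po a b → E a b) ∧
  (∀ r, T.isRead r = true → E (T.D r) r) ∧
  (∀ r w', T.isRead r = true → T.isRead w' = false → T.var w' = T.var r →
    w' ≠ T.D r → Relation.TransGen E w' r → E w' (T.D r))

/-- The closure of the operation graph: the least relation containing the
program-order and write-to edges and closed under Rule C. -/
def PramTrace.closure (T : PramTrace ι) (a b : ι) : Prop :=
  ∀ E : ι → ι → Prop, T.ClosedG E → E a b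

/-- A directed graph (relation) is acyclic if no vertex lies on a directed cycle. -/
def Acyclic {α : Type} (E : α → α → Prop) : Prop := ∀ a, ¬ Relation.TransGen E a a

/- ------------------- Auxiliary material ------------------- -/

open scoped Classical

lemma PramTrace.closure_po (T : PramTrace ι) {a b : ι} (h : T.po a b) : T.closure a b :=
  fun _E hE => hE.1 a b h

lemma PramTrace.closure_D (T : PramTrace ι) {r : ι} (h : T.isRead r = true) :
    T.closure (T.D r) r :=
  fun _E hE => hE.2.1 r h

lemma transgen_lt {α : Type} {R : α → α → Prop} {f : α → ℕ}
    (hf : ∀ x y, R x y → f x < f y) {a b : α} (h : Relation.TransGen R a b) :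
    f a < f b := by
  induction h with
  | single h' => exact hf _ _ h'
  | tail _ h' ih => exact ih.trans (hf _ _ h')

lemma PramTrace.closure_closed (T : PramTrace ι) : T.ClosedG T.closure := by
  refine ⟨fun a b h => T.closure_po h, fun r h => T.closure_D h, ?_⟩
  intro r w' h1 h2 h3 h4 hTG E hE
  exact hE.2.2 r w' h1 h2 h3 h4 (Relation.TransGen.mono (show T.closure ≤ E from fun x y hxy => hxy E hE) w' r hTG)

/-- Number of reads strictly program-order-before `x`. -/
noncomputable def idxR (T : PramTrace ι) (x : ι) : ℕ :=
  (Finset.univ.filter (fun y => T.isRead y = true ∧ T.po y x)).card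

/-- The reads reachable (by a nonempty path in the closure) from `w`. -/
noncomputable def SR (T : PramTrace ι) (w : ι) : Finset ι :=
  Finset.univ.filter (fun r => T.isRead r = true ∧ Relation.TransGen T.closure w r)

lemma mem_SR {T : PramTrace ι} {w r : ι} :
    r ∈ SR T w ↔ T.isRead r = true ∧ Relation.TransGen T.closure w r := by
  simp [SR]

/-- The primary key of the schedule. -/
noncomputable def kv (T : PramTrace ι) (x : ι) : ℕ :=
  if T.isRead x = true then 2 * idxR T x + 2
  else if h : (SR T x).Nonempty then 2 * (SR T x).inf' h (idxR T) + 1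
  else 2 * Fintype.card ι + 2

/-- Downset cardinality: a quasi linear extension of the closure. -/
noncomputable def Lv (T : PramTrace ι) (x : ι) : ℕ :=
  (Finset.univ.filter (fun y => Relation.TransGen T.closure y x)).card

/-- Injective tiebreaker. -/
noncomputable def ev (x : ι) : ℕ := (Fintype.equivFin ι x : ℕ)

/-- The schedule. -/
noncomputable def sched (T : PramTrace ι) (x : ι) : ℕ :=
  kv T x * (Fintype.card ι + 1) ^ 2 + Lv T x * (Fintype.card ι + 1) + ev x

lemma Lv_le_card (T : PramTrace ι) (x : ι) : Lv T x ≤ Fintype.card ι := by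
  classical
  simpa [Lv] using (Finset.card_filter_le (Finset.univ : Finset ι)
    (fun y => Relation.TransGen T.closure y x)).trans (le_of_eq Finset.card_univ)

lemma ev_lt_card (x : ι) : ev x < Fintype.card ι := (Fintype.equivFin ι x).isLt

lemma idx_lt_card {T : PramTrace ι} {x : ι} (hx : T.isRead x = true) :
    idxR T x < Fintype.card ι := by
  classical
  have hnot : x ∉ Finset.univ.filter (fun y => T.isRead y = true ∧ T.po y x) := by
    simp only [Finset.mem_filter, Finset.mem_univ, true_and, not_and]
    exact fun _ h => T.po_irrefl x h
  have : (Finset.univ.filter (fun y => T.isRead y = true ∧ T.po y x)) ⊂ Finset.univ := by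
    rw [Finset.ssubset_univ_iff]
    intro h
    rw [h] at hnot
    exact hnot (Finset.mem_univ x)
  simpa [idxR, Finset.card_univ] using Finset.card_lt_card this

lemma idx_lt_idx {T : PramTrace ι} {a b : ι} (ha : T.isRead a = true) (hpo : T.po a b) :
    idxR T a < idxR T b := by
  classical
  apply Finset.card_lt_card
  have hsub : (Finset.univ.filter (fun y => T.isRead y = true ∧ T.po y a)) ⊆
      (Finset.univ.filter (fun y => T.isRead y = true ∧ T.po y b)) := by
    intro y hy
    simp only [Finset.mem_filter, Finset.mem_univ, true_and] at *
    exact ⟨hy.1, T.po_trans hy.2 hpo⟩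
  refine (Finset.ssubset_iff_of_subset hsub).mpr ⟨a, ?_, ?_⟩
  · simp only [Finset.mem_filter, Finset.mem_univ, true_and]
    exact ⟨ha, hpo⟩
  · simp only [Finset.mem_filter, Finset.mem_univ, true_and, not_and]
    exact fun _ h => T.po_irrefl a h

/-- Two reads connected by a path are program-order related in the right direction. -/
lemma po_of_read_read {T : PramTrace ι} (hac : Acyclic T.closure) {a b : ι}
    (ha : T.isRead a = true) (hb : T.isRead b = true)
    (h : Relation.TransGen T.closure a b) : T.po a b := by
  rcases eq_or_ne a b with rfl | hne
  · exact absurd h (hac a)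
  rcases T.po_total a b (by rw [T.reads_p0 a ha, T.reads_p0 b hb]) hne with h1 | h1
  · exact h1
  · exact absurd (h.tail (T.closure_po h1)) (hac a)

lemma kv_read {T : PramTrace ι} {x : ι} (hx : T.isRead x = true) :
    kv T x = 2 * idxR T x + 2 := by rw [kv, if_pos hx]

lemma kv_le {T : PramTrace ι} (hac : Acyclic T.closure) {a b : ι}
    (h : T.closure a b) : kv T a ≤ kv T b := by
  by_cases ha : T.isRead a = true <;> by_cases hb : T.isRead b = true
  · -- read → read
    rw [kv_read ha, kv_read hb]
    have := idx_lt_idx ha (po_of_read_read hac ha hb (Relation.TransGen.single h))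
    omega
  · -- read → write
    rw [kv_read ha, kv, if_neg hb]
    by_cases hS : (SR T b).Nonempty
    · rw [dif_pos hS]
      obtain ⟨r₁, hr₁, heq⟩ := Finset.exists_mem_eq_inf' hS (idxR T)
      rw [mem_SR] at hr₁
      have hpath : Relation.TransGen T.closure a r₁ :=
        (Relation.TransGen.single h).trans hr₁.2
      have := idx_lt_idx ha (po_of_read_read hac ha hr₁.1 hpath)
      omega
    · rw [dif_neg hS]
      have := idx_lt_card ha
      omega
  · -- write → read
    rw [kv, if_neg ha, kv_read hb]
    have hmem : b ∈ SR T a := mem_SR.mpr ⟨hb, Relation.TransGen.single h⟩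
    have hS : (SR T a).Nonempty := ⟨b, hmem⟩
    rw [dif_pos hS]
    have := Finset.inf'_le (idxR T) hmem
    omega
  · -- write → write
    rw [kv, if_neg ha, kv, if_neg hb]
    by_cases hSb : (SR T b).Nonempty
    · have hsub : SR T b ⊆ SR T a := by
        intro r hr
        rw [mem_SR] at *
        exact ⟨hr.1, Relation.TransGen.head h hr.2⟩
      have hSa : (SR T a).Nonempty := hSb.mono hsub
      rw [dif_pos hSb, dif_pos hSa]
      obtain ⟨r₁, hr₁, heq⟩ := Finset.exists_mem_eq_inf' hSb (idxR T)
      have := Finset.inf'_le (idxR T) (hsub hr₁)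
      omega
    · rw [dif_neg hSb]
      by_cases hSa : (SR T a).Nonempty
      · rw [dif_pos hSa]
        obtain ⟨r₁, hr₁, heq⟩ := Finset.exists_mem_eq_inf' hSa (idxR T)
        have := idx_lt_card (mem_SR.mp hr₁).1
        omega
      · rw [dif_neg hSa]

lemma Lv_lt {T : PramTrace ι} (hac : Acyclic T.closure) {a b : ι}
    (h : T.closure a b) : Lv T a < Lv T b := by
  classical
  apply Finset.card_lt_card
  have hsub : (Finset.univ.filter (fun y => Relation.TransGen T.closure y a)) ⊆
      (Finset.univ.filter (fun y => Relation.TransGen T.closure y b)) := by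
    intro y hy
    simp only [Finset.mem_filter, Finset.mem_univ, true_and] at *
    exact hy.tail h
  refine (Finset.ssubset_iff_of_subset hsub).mpr ⟨a, ?_, ?_⟩
  · simp only [Finset.mem_filter, Finset.mem_univ, true_and]
    exact Relation.TransGen.single h
  · simp only [Finset.mem_filter, Finset.mem_univ, true_and]
    exact hac a

lemma sched_lt_of_k_lt {T : PramTrace ι} {a b : ι} (hk : kv T a < kv T b) :
    sched T a < sched T b := by
  have h1 := Lv_le_card T a
  have h2 := ev_lt_card a
  unfold sched
  nlinarith [sq_nonneg (Fintype.card ι + 1), Nat.zero_le (Lv T b * (Fintype.card ι + 1) + ev b)]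

lemma sched_mono {T : PramTrace ι} (hac : Acyclic T.closure) {a b : ι}
    (h : T.closure a b) : sched T a < sched T b := by
  have hk := kv_le hac h
  have hL := Lv_lt hac h
  have h2 := ev_lt_card a
  unfold sched
  nlinarith [sq_nonneg (Fintype.card ι + 1)]

lemma sched_mod (T : PramTrace ι) (x : ι) :
    sched T x % (Fintype.card ι + 1) = ev x := by
  have he : ev x < Fintype.card ι + 1 := (ev_lt_card x).trans (Nat.lt_succ_self _)
  have h : sched T x = ev x +
      (kv T x * (Fintype.card ι + 1) + Lv T x) * (Fintype.card ι + 1) := by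
    unfold sched; ring
  rw [h, Nat.add_mul_mod_self_right, Nat.mod_eq_of_lt he]

lemma sched_injective (T : PramTrace ι) : Function.Injective (sched T) := by
  intro a b hab
  have : ev a = ev b := by
    rw [← sched_mod T a, ← sched_mod T b, hab]
  exact (Fintype.equivFin ι).injective (Fin.val_injective this)

/-- A trace (with unique write values, so each read has a unique dictating write)
satisfies PRAM consistency w.r.t. `p₀` if and only if the closure of the operation
graph under program-order edges, write-to edges, and Rule C is acyclic. -/
theorem stmt4 (T : PramTrace ι) : T.PRAM ↔ Acyclic T.closure := by
  constructor
  · rintro ⟨σ, hinj, hpo, hD, h4⟩ a hcyc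
    have hE : T.ClosedG (fun x y => σ x < σ y) := by
      refine ⟨hpo, hD, ?_⟩
      intro r w' h1 h2 h3 hne hTG
      have hlt : σ w' < σ r := transgen_lt (fun _ _ h => h) hTG
      have h5 := h4 r w' h1 h2 h3 hne
      have hne' : σ w' ≠ σ (T.D r) := fun he => hne (hinj he)
      rcases lt_trichotomy (σ w') (σ (T.D r)) with h | h | h
      · exact h
      · exact absurd h hne'
      · exact absurd ⟨h, hlt⟩ h5
    have hmono : ∀ x y, T.closure x y → σ x < σ y := fun x y hx => hx _ hE
    exact lt_irrefl _ (transgen_lt (f := σ) (fun x y h => hmono x y h) hcyc)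
  · intro hac
    refine ⟨sched T, sched_injective T, ?_, ?_, ?_⟩
    · exact fun a b h => sched_mono hac (T.closure_po h)
    · exact fun r hr => sched_mono hac (T.closure_D hr)
    · rintro r w' h1 h2 h3 hne ⟨hs1, hs2⟩
      -- first: kv T w' ≤ kv T r
      have hk : kv T w' ≤ kv T r := by
        by_contra hk
        have := sched_lt_of_k_lt (lt_of_not_ge hk)
        omega
      rw [kv_read h1] at hk
      rw [kv, if_neg (by simp [h2] : ¬ T.isRead w' = true)] at hk
      by_cases hS : (SR T w').Nonempty
      · rw [dif_pos hS] at hk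
        obtain ⟨r₁, hr₁, heq⟩ := Finset.exists_mem_eq_inf' hS (idxR T)
        rw [mem_SR] at hr₁
        rw [heq] at hk
        have hidx : idxR T r₁ ≤ idxR T r := by omega
        have hpath : Relation.TransGen T.closure w' r := by
          rcases eq_or_ne r₁ r with rfl | hne₁
          · exact hr₁.2
          · have hpo : T.po r₁ r := by
              rcases T.po_total r₁ r
                  (by rw [T.reads_p0 r₁ hr₁.1, T.reads_p0 r h1]) hne₁ with h | h
              · exact h
              · exact absurd (idx_lt_idx h1 h) (by omega)
            exact hr₁.2.tail (T.closure_po hpo)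
        have hC : T.closure w' (T.D r) := T.closure_closed.2.2 r w' h1 h2 h3 hne hpath
        have := sched_mono hac hC
        omega
      · rw [dif_neg hS] at hk
        have := idx_lt_card h1
        omega
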